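/- Let p be an odd prime and write p - 1 = 2^n · z with z odd. If m ∈ (ZMod p)ˣ is a square, then there exists r ∈ (ZMod p)ˣ with r^(2^n) = 1 such that (m^((p-z)/2) · r)² = m; moreover, for this r, the element m^((p-z)/2) · r is a square in (ZMod p)ˣ if and only if r is a square in (ZMod p)ˣ. -/

import Mathlib

theorem sqrt_of_quadratic_residue (p : ℕ) (hp : p.Prime) (hp2 : p ≠ 2)
    (n z : ℕ) (hz : Odd z) (hnz : p - 1 = 2 ^ n * z)
    (m : (ZMod p)ˣ) (hm : IsSquare m) :
    ∃ r : (ZMod p)ˣ, r ^ (2 ^ n) = 1 ∧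
      (m ^ ((p - z) / 2) * r) ^ 2 = m ∧
      (IsSquare (m ^ ((p - z) / 2) * r) ↔ IsSquare r) := by
  haveI : Fact p.Prime := ⟨hp⟩
  obtain ⟨s, hs⟩ := hm
  have hodd : Odd p := hp.odd_of_ne_two hp2
  have hp1 : 1 ≤ p := hp.one_lt.le
  have hzle : z ≤ p - 1 := by
    rw [hnz]; exact Nat.le_mul_of_pos_left z (pow_pos (by norm_num) n)
  have hzp : z ≤ p := hzle.trans (Nat.sub_le p 1)
  have heven : Even (p - z) := Nat.Odd.sub_odd hodd hz
  have hdiv2 : (p - z) / 2 * 2 = p - z := Nat.div_mul_cancel heven.two_dvd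
  refine ⟨s ^ z, ?_, ?_, ?_⟩
  · rw [← pow_mul, mul_comm, ← hnz]
    exact ZMod.units_pow_card_sub_one_eq_one p s
  · have hr2 : (s ^ z) ^ 2 = m ^ z := by
      rw [hs, ← pow_mul, mul_comm z 2, pow_mul, pow_two]
    rw [mul_pow, ← pow_mul, hdiv2, hr2, ← pow_add,
      Nat.sub_add_cancel hzp]
    calc m ^ p = m ^ (p - 1) * m := by rw [← pow_succ, Nat.sub_add_cancel hp1]
    _ = m := by rw [ZMod.units_pow_card_sub_one_eq_one p m, one_mul]
  · have hx : IsSquare (m ^ ((p - z) / 2)) := (show IsSquare m from ⟨s, hs⟩).pow _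
    constructor
    · intro h
      have := hx.inv.mul h
      rwa [inv_mul_cancel_left] at this
    · exact fun h => hx.mul h
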